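/- For every B-DMC W with finite output alphabet, I(W)² + Z(W)² ≤ 1. -/

import Mathlib

open Finset Real

/-- A binary-input discrete memoryless channel (B-DMC): nonnegative entries
and each row (fixed input) sums to 1. -/
def IsBDMC {Y : Type*} [Fintype Y] (W : Y → ZMod 2 → ℝ) : Prop :=
  (∀ y x, 0 ≤ W y x) ∧ (∀ x, ∑ y, W y x = 1)

/-- Bhattacharyya parameter Z(W). -/
noncomputable def bhatt {Y : Type*} [Fintype Y] (W : Y → ZMod 2 → ℝ) : ℝ :=
  ∑ y, Real.sqrt (W y 0 * W y 1)

/-- Symmetric capacity I(W). -/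
noncomputable def symCap {Y : Type*} [Fintype Y] (W : Y → ZMod 2 → ℝ) : ℝ :=
  ∑ y, ∑ x : ZMod 2,
    (1 / 2) * W y x * Real.logb 2 (W y x / ((1 / 2) * (W y 0 + W y 1)))


private lemma log_ge_one_sub_inv {t : ℝ} (ht : 0 < t) : 1 - 1/t ≤ Real.log t := by
  have h := Real.log_le_sub_one_of_pos (x := 1/t) (by positivity)
  rw [one_div, Real.log_inv] at h
  have ht' : (1:ℝ)/t = t⁻¹ := one_div t
  linarith

private lemma concave_piece {p : ℝ} (hp : 1/2 ≤ p) (hp1 : p ≤ 1) :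
    p * Real.log p ≤ -((1-p) * Real.log 2) := by
  have h := (Real.strictConcaveOn_negMulLog.concaveOn).2
    (Set.mem_Ici.2 (by norm_num : (0:ℝ) ≤ 1/2))
    (Set.mem_Ici.2 (by norm_num : (0:ℝ) ≤ 1))
    (by linarith : (0:ℝ) ≤ 2*(1-p)) (by linarith : (0:ℝ) ≤ 2*p-1) (by ring)
  simp only [smul_eq_mul, Real.negMulLog] at h
  have hlog : Real.log (1/2) = -Real.log 2 := by
    rw [one_div, Real.log_inv]
  rw [hlog] at h
  have harg : 2*(1-p) * (1/2) + (2*p-1) * 1 = p := by ring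
  rw [harg] at h
  nlinarith [h, Real.log_one]

private lemma G_upper {p : ℝ} (hp : 1/2 ≤ p) (hp1 : p ≤ 1) :
    p * Real.log (2*p) + (1-p) * Real.log (2*(1-p)) ≤ (2*p-1) * Real.log 2 := by
  have hp0 : 0 < p := by linarith
  have h1 : Real.log (2*p) = Real.log 2 + Real.log p := Real.log_mul (by norm_num) (ne_of_gt hp0)
  have h2 : (1-p) * Real.log (2*(1-p)) ≤ 0 := by
    rcases eq_or_lt_of_le (by linarith : (0:ℝ) ≤ 1-p) with h | h
    · rw [← h]; simp
    · exact mul_nonpos_of_nonneg_of_nonpos (le_of_lt h)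
        (Real.log_nonpos (by linarith) (by linarith))
  have h3 := concave_piece hp hp1
  rw [h1]
  nlinarith
private lemma G_lower {p : ℝ} (hp : 1/2 ≤ p) (hp1 : p ≤ 1) :
    0 ≤ p * Real.log (2*p) + (1-p) * Real.log (2*(1-p)) := by
  have hp0 : 0 < p := by linarith
  have h1 : p - 1/2 ≤ p * Real.log (2*p) := by
    have := log_ge_one_sub_inv (t := 2*p) (by linarith)
    have : p * (1 - 1/(2*p)) ≤ p * Real.log (2*p) := by
      apply mul_le_mul_of_nonneg_left this (le_of_lt hp0)
    calc p - 1/2 = p * (1 - 1/(2*p)) := by field_simp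
      _ ≤ _ := this
  rcases eq_or_lt_of_le (by linarith : (0:ℝ) ≤ 1-p) with h | h
  · have hp1' : p = 1 := by linarith
    rw [← h]
    nlinarith
  · have h2 : (1-p) - 1/2 ≤ (1-p) * Real.log (2*(1-p)) := by
      have hl := log_ge_one_sub_inv (t := 2*(1-p)) (by linarith)
      have : (1-p) * (1 - 1/(2*(1-p))) ≤ (1-p) * Real.log (2*(1-p)) :=
        mul_le_mul_of_nonneg_left hl (le_of_lt h)
      calc (1-p) - 1/2 = (1-p) * (1 - 1/(2*(1-p))) := by field_simp
        _ ≤ _ := this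
    linarith

private lemma G_abs {p : ℝ} (hp : 0 ≤ p) (hp1 : p ≤ 1) :
    |p * Real.log (2*p) + (1-p) * Real.log (2*(1-p))| ≤ |2*p-1| * Real.log 2 := by
  rcases le_total (1/2 : ℝ) p with h | h
  · rw [abs_of_nonneg (G_lower h hp1), abs_of_nonneg (by linarith : (0:ℝ) ≤ 2*p-1)]
    exact G_upper h hp1
  · have h1 := G_lower (p := 1-p) (by linarith) (by linarith)
    have h2 := G_upper (p := 1-p) (by linarith) (by linarith)
    have e : (1:ℝ) - (1-p) = p := by ring
    rw [e] at h1 h2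
    rw [abs_of_nonneg (by linarith), abs_of_nonpos (by linarith : 2*p-1 ≤ 0)]
    calc p * Real.log (2*p) + (1-p) * Real.log (2*(1-p))
        = (1-p) * Real.log (2*(1-p)) + p * Real.log (2*p) := by ring
      _ ≤ (2*(1-p)-1) * Real.log 2 := h2
      _ = -(2*p-1) * Real.log 2 := by ring


private lemma point (a b : ℝ) (ha : 0 ≤ a) (hb : 0 ≤ b)
    (Gabs : |(a/(a+b)) * Real.log (2*(a/(a+b))) + (1-(a/(a+b))) * Real.log (2*(1-(a/(a+b))))|
      ≤ |2*(a/(a+b))-1| * Real.log 2) :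
    ((1/2)*a*Real.logb 2 (a/((1/2)*(a+b))) + (1/2)*b*Real.logb 2 (b/((1/2)*(a+b))))^2
      + Real.sqrt (a*b)^2 ≤ ((1/2)*(a+b))^2 := by
  rcases eq_or_lt_of_le (by positivity : (0:ℝ) ≤ a + b) with hs | hs
  · have ha0 : a = 0 := by linarith
    have hb0 : b = 0 := by linarith
    simp [ha0, hb0]
  · set p := a/(a+b) with hp
    have hlog2 : 0 < Real.log 2 := Real.log_pos (by norm_num)
    have e1 : a/((1/2)*(a+b)) = 2*p := by rw [hp]; field_simp
    have e2 : b/((1/2)*(a+b)) = 2*(1-p) := by rw [hp]; field_simp; ring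
    have ea : a = p * (a+b) := by rw [hp]; field_simp
    have eb : b = (1-p) * (a+b) := by rw [hp]; field_simp; ring
    set G := p * Real.log (2*p) + (1-p) * Real.log (2*(1-p)) with hG
    have eF : (1/2)*a*Real.logb 2 (a/((1/2)*(a+b))) + (1/2)*b*Real.logb 2 (b/((1/2)*(a+b)))
        = (a+b) * G / (2 * Real.log 2) := by
      rw [e1, e2, Real.logb, Real.logb, hG]
      linear_combination (Real.log (2*p)/(2*Real.log 2)) * ea
        + (Real.log (2*(1-p))/(2*Real.log 2)) * eb
    have habs : |(a+b) * G / (2 * Real.log 2)| ≤ |a-b|/2 := by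
      have h1 : |(a+b) * G / (2 * Real.log 2)| = (a+b) * |G| / (2 * Real.log 2) := by
        rw [abs_div, abs_mul, abs_of_pos hs, abs_of_pos (by positivity : (0:ℝ) < 2 * Real.log 2)]
      rw [h1]
      have h2 : (a+b) * |G| ≤ (a+b) * (|2*p-1| * Real.log 2) :=
        mul_le_mul_of_nonneg_left Gabs (le_of_lt hs)
      have h3 : (a+b) * |2*p-1| = |a-b| := by
        rw [← abs_of_pos hs, ← abs_mul]
        congr 1
        rw [hp]; field_simp; ring
      rw [div_le_iff₀ (by positivity)]
      calc (a+b) * |G| ≤ (a+b) * |2*p-1| * Real.log 2 := by linarith [h2]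
        _ = |a-b| * Real.log 2 := by rw [h3]
        _ ≤ |a-b|/2 * (2 * Real.log 2) := by ring_nf; linarith [abs_nonneg (a-b)]
    have hsq : ((a+b) * G / (2 * Real.log 2))^2 ≤ (a-b)^2/4 := by
      have := sq_le_sq' (neg_le_of_abs_le (habs.trans (le_of_eq rfl))) (le_of_abs_le habs)
      calc ((a+b) * G / (2 * Real.log 2))^2 ≤ (|a-b|/2)^2 := this
        _ = (a-b)^2/4 := by rw [div_pow, sq_abs]; ring
    rw [eF, Real.sq_sqrt (by positivity : (0:ℝ) ≤ a*b)]
    nlinarith [hsq]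


theorem symCap_sq_add_bhatt_sq_le_one' {Y : Type*} [Fintype Y]
    (W : Y → ZMod 2 → ℝ) (hW : IsBDMC W) :
    symCap W ^ 2 + bhatt W ^ 2 ≤ 1 := by
  obtain ⟨hpos, hsum⟩ := hW
  set f : Y → ℝ := fun y => ∑ x : ZMod 2,
    (1 / 2) * W y x * Real.logb 2 (W y x / ((1 / 2) * (W y 0 + W y 1))) with hf
  set g : Y → ℝ := fun y => Real.sqrt (W y 0 * W y 1) with hg
  set s : Y → ℝ := fun y => (1/2) * (W y 0 + W y 1) with hs
  have hsum_s : ∑ y, s y = 1 := by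
    simp only [hs]
    rw [← Finset.mul_sum, Finset.sum_add_distrib, hsum 0, hsum 1]
    norm_num
  have hpt : ∀ y, (f y)^2 + (g y)^2 ≤ (s y)^2 := by
    intro y
    have hfy : f y = (1/2)*(W y 0)*Real.logb 2 ((W y 0)/((1/2)*((W y 0)+(W y 1))))
        + (1/2)*(W y 1)*Real.logb 2 ((W y 1)/((1/2)*((W y 0)+(W y 1)))) := by
      rw [hf]; exact Fin.sum_univ_two _
    rw [hfy, hg, hs]
    set a := W y 0; set b := W y 1
    have hab : 0 ≤ a := hpos y 0
    have hbb : 0 ≤ b := hpos y 1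
    rcases eq_or_lt_of_le (by positivity : (0:ℝ) ≤ a + b) with h0 | h0
    · exact point a b hab hbb (by
        rw [← h0]
        norm_num [abs_of_nonneg (Real.log_nonneg (by norm_num : (1:ℝ) ≤ 2))])
    · have hp0 : 0 ≤ a/(a+b) := by positivity
      have hp1 : a/(a+b) ≤ 1 := by
        rw [div_le_one h0]; linarith
      exact point a b hab hbb (G_abs hp0 hp1)
  set z : Y → ℂ := fun y => ⟨f y, g y⟩ with hz
  have hnorm : ∀ y, ‖z y‖ ≤ s y := by
    intro y
    have hs0 : 0 ≤ s y := by
      have := hpos y 0; have := hpos y 1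
      simp only [hs]; positivity
    have : ‖z y‖ = Real.sqrt ((f y)^2 + (g y)^2) := by
      rw [Complex.norm_def, Complex.normSq_mk]
      congr 1; ring
    rw [this]
    calc Real.sqrt ((f y)^2 + (g y)^2) ≤ Real.sqrt ((s y)^2) :=
          Real.sqrt_le_sqrt (hpt y)
      _ = s y := Real.sqrt_sq hs0
  have hzsum : (∑ y, z y).re = symCap W ∧ (∑ y, z y).im = bhatt W := by
    constructor
    · rw [Complex.re_sum]; rfl
    · rw [Complex.im_sum]; rfl
  have h1 : ‖∑ y, z y‖ ≤ 1 := by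
    calc ‖∑ y, z y‖ ≤ ∑ y, ‖z y‖ := norm_sum_le _ _
      _ ≤ ∑ y, s y := Finset.sum_le_sum (fun y _ => hnorm y)
      _ = 1 := hsum_s
  have h2 : symCap W ^ 2 + bhatt W ^ 2 = ‖∑ y, z y‖^2 := by
    rw [Complex.sq_norm, Complex.normSq_apply, hzsum.1, hzsum.2]
    ring
  rw [h2]
  calc ‖∑ y, z y‖^2 ≤ 1^2 := by
        apply sq_le_sq' _ h1
        linarith [norm_nonneg (∑ y, z y)]
    _ = 1 := one_pow 2

/-- I(W)² + Z(W)² ≤ 1. -/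
theorem symCap_sq_add_bhatt_sq_le_one {Y : Type*} [Fintype Y]
    (W : Y → ZMod 2 → ℝ) (hW : IsBDMC W) :
    symCap W ^ 2 + bhatt W ^ 2 ≤ 1 :=
  symCap_sq_add_bhatt_sq_le_one' W hW
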